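/- Let K be an unconditional, permutationally invariant convex body in ℝⁿ, n ≥ 3, with projections K_i and define F as the normalized decreasing slice-volume function supported on [0, L] as in the proof of the main theorem. Then ∫₀ᴸ F(x) dx = (1/(2(n−1)))·|K_{n-1}|/|K_{n-2}| and ∫₀ᴸ x·F(x) dx ≥ (1/(4n(n−1)))·|K_n|/|K_{n-2}|. -/

import Mathlib

open MeasureTheory intervalIntegral

/-- Orthogonal projection of a set in `ℝⁿ` onto the span of the first `i`
standard basis vectors, identified with `ℝⁱ`. -/
def proj {n : ℕ} (i : ℕ) (h : i ≤ n) (K : Set (Fin n → ℝ)) : Set (Fin i → ℝ) :=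
  (fun x (j : Fin i) => x (Fin.castLE h j)) '' K

namespace BFAux

open MeasureTheory Set
open scoped ENNReal

noncomputable section

def sgn (b : Bool) : ℝ := if b then 1 else -1

lemma sgn_mul_sgn (b : Bool) (t : ℝ) : sgn b * (sgn b * t) = t := by
  cases b <;> simp [sgn]

def T {k : ℕ} (g : (Fin k → Bool) × Equiv.Perm (Fin k)) (x : Fin k → ℝ) : Fin k → ℝ :=
  fun i => sgn (g.1 i) * x (g.2 i)

def sCone (k : ℕ) : Set (Fin k → ℝ) := {x | StrictAnti x ∧ ∀ i, 0 < x i}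
def cCone (k : ℕ) : Set (Fin k → ℝ) := {x | Antitone x ∧ ∀ i, 0 ≤ x i}

lemma sCone_subset_cCone (k : ℕ) : sCone k ⊆ cCone k :=
  fun _ h => ⟨h.1.antitone, fun i => (h.2 i).le⟩

lemma isOpen_sCone (k : ℕ) : IsOpen (sCone k) := by
  have : sCone k = (⋂ (i : Fin k) (j : Fin k) (_ : i < j), {x : Fin k → ℝ | x j < x i}) ∩
      ⋂ (i : Fin k), {x : Fin k → ℝ | 0 < x i} := by
    ext x
    simp only [sCone, mem_inter_iff, mem_iInter, mem_setOf_eq]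
    exact and_congr Iff.rfl Iff.rfl
  rw [this]
  refine IsOpen.inter ?_ ?_
  · exact isOpen_iInter_of_finite fun i => isOpen_iInter_of_finite fun j =>
      isOpen_iInter_of_finite fun _ =>
        isOpen_lt (continuous_apply j) (continuous_apply i)
  · exact isOpen_iInter_of_finite fun i => isOpen_lt continuous_const (continuous_apply i)

lemma isClosed_antitone (k : ℕ) : IsClosed {x : Fin k → ℝ | Antitone x} := by
  have : {x : Fin k → ℝ | Antitone x} =
      ⋂ (i : Fin k) (j : Fin k) (_ : i ≤ j), {x : Fin k → ℝ | x j ≤ x i} := by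
    ext x; simp only [mem_iInter, mem_setOf_eq]; rfl
  rw [this]
  exact isClosed_iInter fun i => isClosed_iInter fun j => isClosed_iInter fun _ =>
    isClosed_le (continuous_apply j) (continuous_apply i)

lemma isClosed_cCone (k : ℕ) : IsClosed (cCone k) := by
  have : cCone k = {x : Fin k → ℝ | Antitone x} ∩ ⋂ (i : Fin k), {x : Fin k → ℝ | 0 ≤ x i} := by
    ext x; simp only [cCone, mem_inter_iff, mem_iInter, mem_setOf_eq]
  rw [this]
  exact (isClosed_antitone k).inter
    (isClosed_iInter fun i => isClosed_le continuous_const (continuous_apply i))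

lemma null_linrel {k : ℕ} (i j : Fin k) (h : i ≠ j) (c : ℝ) :
    volume {x : Fin k → ℝ | x i = c * x j} = 0 := by
  set f : (Fin k → ℝ) →ₗ[ℝ] ℝ :=
    (LinearMap.proj i : (Fin k → ℝ) →ₗ[ℝ] ℝ) - c • (LinearMap.proj j) with hf
  have : {x : Fin k → ℝ | x i = c * x j} = (LinearMap.ker f : Set (Fin k → ℝ)) := by
    ext x
    simp [hf, LinearMap.mem_ker, sub_eq_zero, LinearMap.proj_apply, smul_eq_mul]
  rw [this]
  refine Measure.addHaar_submodule _ _ ?_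
  intro htop
  have h1 : f (Pi.single i 1) = 0 := by
    have : Pi.single i 1 ∈ LinearMap.ker f := htop ▸ Submodule.mem_top
    exact this
  rw [hf] at h1
  simp only [LinearMap.sub_apply, LinearMap.smul_apply, LinearMap.proj_apply, smul_eq_mul,
    Pi.single_eq_same, Pi.single_eq_of_ne (Ne.symm h)] at h1
  norm_num at h1

lemma null_zero {k : ℕ} (i : Fin k) : volume {x : Fin k → ℝ | x i = 0} = 0 := by
  have : {x : Fin k → ℝ | x i = 0} = (LinearMap.ker (LinearMap.proj i (R := ℝ)
      (φ := fun _ : Fin k => ℝ)) : Set (Fin k → ℝ)) := by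
    ext x; simp [LinearMap.mem_ker]
  rw [this]
  refine Measure.addHaar_submodule _ _ ?_
  intro htop
  have h1 : Pi.single i 1 ∈ LinearMap.ker (LinearMap.proj i (R := ℝ)
      (φ := fun _ : Fin k => ℝ)) := htop ▸ Submodule.mem_top
  rw [LinearMap.mem_ker] at h1
  simp at h1


lemma measurePreserving_perm {k : ℕ} (π : Equiv.Perm (Fin k)) :
    MeasurePreserving (fun (x : Fin k → ℝ) (i : Fin k) => x (π i)) volume volume := by
  have h := volume_measurePreserving_piCongrLeft (fun _ : Fin k => ℝ) π.symm
  have : ⇑(MeasurableEquiv.piCongrLeft (fun _ : Fin k => ℝ) π.symm) =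
      fun (x : Fin k → ℝ) (i : Fin k) => x (π i) := by
    ext x j
    have h2 : (Equiv.piCongrLeft (fun _ : Fin k => ℝ) π.symm) x (π.symm (π j)) = x (π j) :=
      Equiv.piCongrLeft_apply_apply (fun _ : Fin k => ℝ) π.symm x (π j)
    rw [Equiv.symm_apply_apply] at h2
    exact h2
  rwa [this] at h

lemma measurePreserving_flip {k : ℕ} (ε : Fin k → Bool) :
    MeasurePreserving (fun (x : Fin k → ℝ) (i : Fin k) => sgn (ε i) * x i) volume volume := by
  refine volume_preserving_pi fun i => ?_
  rcases Bool.dichotomy (ε i) with h | h <;> rw [h]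
  · have : (HMul.hMul (sgn false) : ℝ → ℝ) = fun t => -t := by funext t; simp [sgn]
    rw [this]
    exact Measure.measurePreserving_neg _
  · have : (HMul.hMul (sgn true) : ℝ → ℝ) = id := by funext t; simp [sgn]
    rw [this]
    exact MeasurePreserving.id _

lemma measurePreserving_T {k : ℕ} (g : (Fin k → Bool) × Equiv.Perm (Fin k)) :
    MeasurePreserving (T g) volume volume := by
  have : T g = (fun (x : Fin k → ℝ) (i : Fin k) => sgn (g.1 i) * x i) ∘
      (fun (x : Fin k → ℝ) (i : Fin k) => x (g.2 i)) := rfl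
  rw [this]
  exact (measurePreserving_flip g.1).comp (measurePreserving_perm g.2)
section Counting
variable {k : ℕ}

def ginv (g : (Fin k → Bool) × Equiv.Perm (Fin k)) : (Fin k → Bool) × Equiv.Perm (Fin k) :=
  (g.1 ∘ g.2.symm, g.2.symm)

lemma T_ginv_T (g : (Fin k → Bool) × Equiv.Perm (Fin k)) (x : Fin k → ℝ) :
    T (ginv g) (T g x) = x := by
  funext j
  show sgn (g.1 (g.2.symm j)) * (sgn (g.1 (g.2.symm j)) * x (g.2 (g.2.symm j))) = x j
  rw [sgn_mul_sgn, Equiv.apply_symm_apply]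

variable {S : Set (Fin k → ℝ)}
  (hu : ∀ x ∈ S, ∀ ε : Fin k → ℝ, (∀ i, ε i = 1 ∨ ε i = -1) → (fun i => ε i * x i) ∈ S)
  (hp : ∀ x ∈ S, ∀ π : Equiv.Perm (Fin k), (fun i => x (π i)) ∈ S)

include hu hp in
lemma T_mem_of_mem (g : (Fin k → Bool) × Equiv.Perm (Fin k)) {x : Fin k → ℝ} (hx : x ∈ S) :
    T g x ∈ S := by
  have h1 : (fun i => x (g.2 i)) ∈ S := hp x hx g.2
  have h2 := hu _ h1 (fun i => sgn (g.1 i)) (fun i => by rcases Bool.dichotomy (g.1 i) with h | h <;> simp [sgn, h])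
  exact h2

include hu hp in
lemma T_preimage (g : (Fin k → Bool) × Equiv.Perm (Fin k)) : T g ⁻¹' S = S := by
  ext x
  constructor
  · intro hx
    have := T_mem_of_mem hu hp (ginv g) hx
    rwa [T_ginv_T] at this
  · intro hx
    exact T_mem_of_mem hu hp g hx

lemma abs_T (g : (Fin k → Bool) × Equiv.Perm (Fin k)) (x : Fin k → ℝ) (i : Fin k) :
    |T g x i| = |x (g.2 i)| := by
  show |sgn (g.1 i) * x (g.2 i)| = _
  cases h : g.1 i <;> simp [sgn, abs_mul]

lemma C_disjoint :
    Pairwise fun (g g' : (Fin k → Bool) × Equiv.Perm (Fin k)) =>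
      Disjoint (T g ⁻¹' sCone k) (T g' ⁻¹' sCone k) := by
  intro g g' hne
  rw [Set.disjoint_left]
  rintro x hx hx'
  apply hne
  simp only [mem_preimage, sCone, mem_setOf_eq] at hx hx'
  -- T g x i = |x (g.2 i)| since positive
  have habs : ∀ i, T g x i = |x (g.2 i)| := fun i => by
    rw [← abs_T]; exact (abs_of_pos (hx.2 i)).symm
  have habs' : ∀ i, T g' x i = |x (g'.2 i)| := fun i => by
    rw [← abs_T]; exact (abs_of_pos (hx'.2 i)).symm
  set a : Fin k → ℝ := fun j => -|x j| with ha
  have hmono : Monotone (a ∘ g.2) := by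
    intro i j hij
    rcases eq_or_lt_of_le hij with rfl | hlt
    · exact le_rfl
    · have h3 := hx.1 hlt
      rw [habs, habs] at h3
      show -|x (g.2 i)| ≤ -|x (g.2 j)|
      linarith
  have hmono' : Monotone (a ∘ g'.2) := by
    intro i j hij
    rcases eq_or_lt_of_le hij with rfl | hlt
    · exact le_rfl
    · have h3 := hx'.1 hlt
      rw [habs', habs'] at h3
      show -|x (g'.2 i)| ≤ -|x (g'.2 j)|
      linarith
  have hcomp : a ∘ g.2 = a ∘ g'.2 := Tuple.unique_monotone hmono hmono'
  have hainj : Function.Injective a := by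
    have h1 : Function.Injective (a ∘ g.2) := by
      intro i j hij
      by_contra hne2
      have habs2 : |x (g.2 i)| = |x (g.2 j)| := by
        have h4 : -|x (g.2 i)| = -|x (g.2 j)| := hij
        linarith
      rcases lt_or_gt_of_ne hne2 with h | h
      · have h3 := hx.1 h
        rw [habs, habs, habs2] at h3
        exact lt_irrefl _ h3
      · have h3 := hx.1 h
        rw [habs, habs, habs2] at h3
        exact lt_irrefl _ h3
    intro s t hst
    have : ∀ j, a ((g.2) ((g.2).symm j)) = a j := fun j => by rw [Equiv.apply_symm_apply]
    -- a = (a ∘ g.2) ∘ g.2.symm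
    have hsurj : ∀ u, ∃ v, g.2 v = u := fun u => ⟨g.2.symm u, Equiv.apply_symm_apply _ _⟩
    obtain ⟨s', rfl⟩ := hsurj s
    obtain ⟨t', rfl⟩ := hsurj t
    have := h1 (show (a ∘ g.2) s' = (a ∘ g.2) t' from hst)
    rw [this]
  have hperm : g.2 = g'.2 := Equiv.ext fun i => hainj (congrFun hcomp i)
  have hxne : ∀ i, x (g.2 i) ≠ 0 := fun i => by
    have := hx.2 i
    rw [habs] at this
    exact abs_pos.mp this
  have hsign : g.1 = g'.1 := by
    funext i
    have h1 : 0 < sgn (g.1 i) * x (g.2 i) := hx.2 i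
    have h2 : 0 < sgn (g'.1 i) * x (g'.2 i) := hx'.2 i
    rw [← hperm] at h2
    by_contra hne2
    have : sgn (g.1 i) = - sgn (g'.1 i) := by
      cases hb : g.1 i <;> cases hb' : g'.1 i <;> simp_all [sgn]
    rw [this, neg_mul] at h1
    exact lt_asymm h1 (by linarith)
  exact Prod.ext hsign hperm

def Bad (k : ℕ) : Set (Fin k → ℝ) :=
  (⋃ (i : Fin k) (j : Fin k) (_ : i ≠ j), ({x | x i = x j} ∪ {x | x i = -x j})) ∪
    ⋃ (i : Fin k), {x | x i = 0}

lemma bad_null : volume (Bad k) = 0 := by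
  refine measure_union_null ?_ ?_
  · refine measure_iUnion_null fun i => measure_iUnion_null fun j => measure_iUnion_null fun h => ?_
    refine measure_union_null ?_ ?_
    · simpa using null_linrel i j h 1
    · have := null_linrel i j h (-1)
      simpa [neg_one_mul] using this
  · exact measure_iUnion_null fun i => null_zero i

lemma cover {x : Fin k → ℝ} (hx : x ∉ Bad k) :
    ∃ g : (Fin k → Bool) × Equiv.Perm (Fin k), T g x ∈ sCone k := by
  have hne0 : ∀ i, x i ≠ 0 := by
    intro i hxi
    exact hx (Or.inr (mem_iUnion.mpr ⟨i, hxi⟩))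
  have habs : ∀ i j, i ≠ j → |x i| ≠ |x j| := by
    intro i j hij heq
    rcases abs_eq_abs.mp heq with h | h
    · exact hx (Or.inl (mem_iUnion.mpr ⟨i, mem_iUnion.mpr ⟨j, mem_iUnion.mpr ⟨hij, Or.inl h⟩⟩⟩))
    · exact hx (Or.inl (mem_iUnion.mpr ⟨i, mem_iUnion.mpr ⟨j, mem_iUnion.mpr ⟨hij, Or.inr h⟩⟩⟩))
  set f : Fin k → ℝ := fun j => -|x j| with hf
  have hfinj : Function.Injective f := by
    intro i j hij
    by_contra hne
    exact habs i j hne (by simpa [hf] using hij)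
  set π := Tuple.sort f with hπ
  have hmono : Monotone (f ∘ π) := Tuple.monotone_sort f
  have hstrict : StrictMono (f ∘ π) := hmono.strictMono_of_injective (hfinj.comp π.injective)
  refine ⟨(fun i => decide (0 < x (π i)), π), ?_⟩
  have hT : ∀ i, T (fun i => decide (0 < x (π i)), π) x i = |x (π i)| := by
    intro i
    show sgn (decide (0 < x (π i))) * x (π i) = |x (π i)|
    rcases lt_or_gt_of_ne (hne0 (π i)) with h | h
    · rw [decide_eq_false (by linarith)]
      simp [sgn, abs_of_neg h]
    · rw [decide_eq_true h]
      simp [sgn, abs_of_pos h]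
  constructor
  · intro i j hij
    rw [hT, hT]
    have := hstrict hij
    simp only [hf, Function.comp_apply, neg_lt_neg_iff] at this
    exact this
  · intro i
    rw [hT]
    exact abs_pos.mpr (hne0 (π i))

include hu hp in
theorem counting (hS : MeasurableSet S) :
    volume S = (2 ^ k * k.factorial : ℕ) * volume (S ∩ sCone k) := by
  classical
  set G := (Fin k → Bool) × Equiv.Perm (Fin k)
  set C : G → Set (Fin k → ℝ) := fun g => T g ⁻¹' sCone k with hC
  have hCmeas : ∀ g, MeasurableSet (C g) :=
    fun g => (isOpen_sCone k).measurableSet.preimage (measurePreserving_T g).measurable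
  have hU : MeasurableSet (⋃ g, C g) := MeasurableSet.iUnion hCmeas
  have hsplit : volume S = volume (S ∩ ⋃ g, C g) + volume (S \ ⋃ g, C g) :=
    (measure_inter_add_diff S hU).symm
  have hnull : volume (S \ ⋃ g, C g) = 0 := by
    refine measure_mono_null ?_ bad_null
    intro x hxd
    by_contra hxb
    obtain ⟨g, hg⟩ := cover hxb
    exact hxd.2 (mem_iUnion.mpr ⟨g, hg⟩)
  rw [hnull, add_zero] at hsplit
  have hinter : S ∩ ⋃ g, C g = ⋃ g, S ∩ C g := by rw [inter_iUnion]
  have hdisj : Pairwise (Function.onFun Disjoint fun g => S ∩ C g) := by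
    intro g g' hgg'
    exact Set.disjoint_of_subset inter_subset_right inter_subset_right (C_disjoint hgg')
  have hsum : volume (⋃ g, S ∩ C g) = ∑' g : G, volume (S ∩ C g) :=
    measure_iUnion hdisj fun g => hS.inter (hCmeas g)
  have heach : ∀ g : G, volume (S ∩ C g) = volume (S ∩ sCone k) := by
    intro g
    have h1 : T g ⁻¹' (S ∩ sCone k) = S ∩ C g := by
      rw [Set.preimage_inter, T_preimage hu hp]
    rw [← h1]
    exact (measurePreserving_T g).measure_preimage
      ((hS.inter (isOpen_sCone k).measurableSet).nullMeasurableSet)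
  rw [hsplit, hinter, hsum]
  simp_rw [heach]
  rw [tsum_fintype]
  rw [Finset.sum_const, Finset.card_univ]
  have hcard : Fintype.card G = 2 ^ k * k.factorial := by
    rw [Fintype.card_prod, Fintype.card_perm, Fintype.card_fun]
    simp
  rw [hcard, nsmul_eq_mul]

end Counting

lemma vol_slice {k : ℕ} (i₀ : Fin (k + 1)) (A : Set (Fin (k + 1) → ℝ)) (hA : MeasurableSet A) :
    volume A = ∫⁻ x : ℝ, volume {u : Fin k → ℝ | i₀.insertNth x u ∈ A} := by
  set e := MeasurableEquiv.piFinSuccAbove (fun _ : Fin (k + 1) => ℝ) i₀ with he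
  have hmp : MeasurePreserving e volume volume :=
    volume_preserving_piFinSuccAbove (fun _ : Fin (k + 1) => ℝ) i₀
  have hsymm := hmp.symm e
  have h1 : volume A = volume (e.symm ⁻¹' A) := by
    rw [hsymm.measure_preimage hA.nullMeasurableSet]
  have hBmeas : MeasurableSet (e.symm ⁻¹' A) := e.symm.measurable hA
  rw [h1, Measure.volume_eq_prod, Measure.prod_apply hBmeas]
  refine lintegral_congr fun x => ?_
  congr 1

lemma meas_slice {k : ℕ} (i₀ : Fin (k + 1)) (A : Set (Fin (k + 1) → ℝ)) (hA : MeasurableSet A) :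
    Measurable fun x : ℝ => volume {u : Fin k → ℝ | i₀.insertNth x u ∈ A} := by
  set e := MeasurableEquiv.piFinSuccAbove (fun _ : Fin (k + 1) => ℝ) i₀ with he
  have hBmeas : MeasurableSet (e.symm ⁻¹' A) := e.symm.measurable hA
  exact measurable_measure_prodMk_left (ν := (volume : Measure (Fin k → ℝ))) hBmeas

lemma antitone_snoc_iff {k : ℕ} {y : Fin k → ℝ} {x : ℝ} :
    Antitone (Fin.snoc y x : Fin (k + 1) → ℝ) ↔ Antitone y ∧ ∀ j, x ≤ y j := by
  constructor
  · intro h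
    refine ⟨fun i j hij => ?_, fun j => ?_⟩
    · have := h (Fin.castSucc_le_castSucc_iff.mpr hij)
      simpa [Fin.snoc_castSucc] using this
    · have := h (Fin.le_last (Fin.castSucc j))
      simpa [Fin.snoc_castSucc, Fin.snoc_last] using this
  · rintro ⟨hy, hx⟩ i j hij
    rcases Fin.eq_castSucc_or_eq_last j with ⟨j', rfl⟩ | rfl
    · rcases Fin.eq_castSucc_or_eq_last i with ⟨i', rfl⟩ | rfl
      · simp only [Fin.snoc_castSucc]
        exact hy (Fin.castSucc_le_castSucc_iff.mp hij)
      · exact absurd hij (Fin.castSucc_lt_last j').not_ge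
    · rcases Fin.eq_castSucc_or_eq_last i with ⟨i', rfl⟩ | rfl
      · simp only [Fin.snoc_castSucc, Fin.snoc_last]
        exact hx i'
      · exact le_rfl

variable {n : ℕ} {K : Set (Fin n → ℝ)}



lemma proj_compact {i : ℕ} (h : i ≤ n) (hK : IsCompact K) : IsCompact (proj i h K) :=
  hK.image (continuous_pi fun j => continuous_apply _)

lemma proj_uncond {i : ℕ} (h : i ≤ n)
    (hu : ∀ x ∈ K, ∀ ε : Fin n → ℝ, (∀ l, ε l = 1 ∨ ε l = -1) → (fun l => ε l * x l) ∈ K) :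
    ∀ y ∈ proj i h K, ∀ ε : Fin i → ℝ, (∀ j, ε j = 1 ∨ ε j = -1) →
      (fun j => ε j * y j) ∈ proj i h K := by
  rintro y ⟨z, hz, rfl⟩ ε hε
  set ε' : Fin n → ℝ := fun l => if hl : (l : ℕ) < i then ε ⟨l, hl⟩ else 1 with hε'
  have h1 : (fun l => ε' l * z l) ∈ K := by
    refine hu z hz ε' fun l => ?_
    by_cases hl : (l : ℕ) < i
    · simpa [hε', hl] using hε ⟨l, hl⟩
    · simp [hε', hl]
  exact ⟨_, h1, by
    funext j
    simp only [hε']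
    have hlt : ((Fin.castLE h j : Fin n) : ℕ) < i := j.2
    rw [dif_pos hlt]
    rfl⟩

lemma proj_perm {i : ℕ} (h : i ≤ n)
    (hp : ∀ x ∈ K, ∀ π : Equiv.Perm (Fin n), (fun l => x (π l)) ∈ K) :
    ∀ y ∈ proj i h K, ∀ π : Equiv.Perm (Fin i), (fun j => y (π j)) ∈ proj i h K := by
  rintro y ⟨z, hz, rfl⟩ π
  set π' : Equiv.Perm (Fin n) := π.viaFintypeEmbedding (Fin.castLEEmb h) with hπ'
  have h1 : (fun l => z (π' l)) ∈ K := hp z hz π'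
  refine ⟨_, h1, ?_⟩
  funext j
  simp only
  have : π' (Fin.castLE h j) = Fin.castLE h (π j) := by
    have := Equiv.Perm.viaFintypeEmbedding_apply_image π (Fin.castLEEmb h) j
    simpa [hπ'] using this
  rw [this]

lemma vol_proj_pos {i : ℕ} (h : i ≤ n) (hK_int : (interior K).Nonempty) :
    0 < volume (proj i h K) := by
  obtain ⟨x₀, hx₀⟩ := hK_int
  obtain ⟨r, hr, hball⟩ := Metric.isOpen_iff.mp isOpen_interior x₀ hx₀
  have hballK : Metric.ball x₀ r ⊆ K := hball.trans interior_subset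
  have hsub : Metric.ball (fun j : Fin i => x₀ (Fin.castLE h j)) r ⊆ proj i h K := by
    intro y hy
    classical
    set z : Fin n → ℝ := fun l => if hl : (l : ℕ) < i then y ⟨l, hl⟩ else x₀ l with hz
    have hzball : z ∈ Metric.ball x₀ r := by
      rw [Metric.mem_ball]
      rcases eq_or_ne i 0 with rfl | hi
      · have : z = x₀ := by
          funext l
          simp [hz]
        rw [this]
        simpa using hr
      · rw [dist_pi_lt_iff hr]
        intro l
        by_cases hl : (l : ℕ) < i
        · have h2 : z l = y ⟨l, hl⟩ := by simp [hz, hl]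
          have h3 : x₀ l = (fun j : Fin i => x₀ (Fin.castLE h j)) ⟨l, hl⟩ := rfl
          rw [h2, h3]
          exact lt_of_le_of_lt
            (dist_le_pi_dist y (fun j : Fin i => x₀ (Fin.castLE h j)) ⟨l, hl⟩)
            (Metric.mem_ball.mp hy)
        · simp [hz, hl]
          exact hr
    refine ⟨z, hballK hzball, ?_⟩
    funext j
    simp only [hz]
    have hlt : ((Fin.castLE h j : Fin n) : ℕ) < i := j.2
    rw [dif_pos hlt]
    rfl
  calc 0 < volume (Metric.ball (fun j : Fin i => x₀ (Fin.castLE h j)) r) :=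
        Metric.measure_ball_pos _ _ hr
    _ ≤ volume (proj i h K) := measure_mono hsub

lemma proj_snoc_zero (m : ℕ) (K : Set (Fin (m + 3) → ℝ)) (hconv : Convex ℝ K)
    (hu : ∀ x ∈ K, ∀ ε : Fin (m + 3) → ℝ, (∀ l, ε l = 1 ∨ ε l = -1) →
      (fun l => ε l * x l) ∈ K)
    (h1 : m + 1 ≤ m + 3) (h2 : m + 2 ≤ m + 3) :
    {y : Fin (m + 1) → ℝ | Fin.snoc y (0 : ℝ) ∈ proj (m + 2) h2 K} = proj (m + 1) h1 K := by
  ext y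
  constructor
  · rintro ⟨w, hw, hwy⟩
    refine ⟨w, hw, ?_⟩
    funext j
    have h3 := congrFun hwy (Fin.castSucc j)
    simp only [Fin.snoc_castSucc] at h3
    have h4 : Fin.castLE h2 (Fin.castSucc j) = Fin.castLE h1 j := rfl
    rw [h4] at h3
    exact h3
  · rintro ⟨z, hz, rfl⟩
    classical
    set ε : Fin (m + 3) → ℝ := fun l => if (l : ℕ) = m + 1 then (-1 : ℝ) else 1 with hε
    have hz' : (fun l => ε l * z l) ∈ K := by
      refine hu z hz ε fun l => ?_
      by_cases hl : (l : ℕ) = m + 1 <;> simp [hε, hl]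
    have hwK : ((1 : ℝ)/2) • z + ((1 : ℝ)/2) • (fun l => ε l * z l) ∈ K :=
      hconv hz hz' (by norm_num) (by norm_num) (by norm_num)
    refine ⟨_, hwK, ?_⟩
    funext j
    rcases Fin.eq_castSucc_or_eq_last j with ⟨j', rfl⟩ | rfl
    · rw [Fin.snoc_castSucc]
      show (1/2 : ℝ) * z _ + (1/2 : ℝ) * (ε _ * z _) = z (Fin.castLE h1 j')
      have hidx : Fin.castLE h2 (Fin.castSucc j') = Fin.castLE h1 j' := rfl
      rw [hidx]
      have hεval : ε (Fin.castLE h1 j') = 1 := by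
        have hne : ((Fin.castLE h1 j' : Fin (m + 3)) : ℕ) ≠ m + 1 := by
          have h5 : ((Fin.castLE h1 j' : Fin (m + 3)) : ℕ) = (j' : ℕ) := rfl
          rw [h5]
          have := j'.2
          omega
        simp only [hε]
        rw [if_neg hne]
      rw [hεval]
      ring
    · rw [Fin.snoc_last]
      show (1/2 : ℝ) * z _ + (1/2 : ℝ) * (ε _ * z _) = 0
      have hεval : ε (Fin.castLE h2 (Fin.last (m + 1))) = -1 := by
        have : ((Fin.castLE h2 (Fin.last (m + 1)) : Fin (m + 3)) : ℕ) = m + 1 := rfl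
        simp [hε, this]
      rw [hεval]
      ring

-- index lemmas for part 2
lemma restrict_insertNth (m : ℕ) (x : ℝ) (u : Fin (m + 2) → ℝ)
    (h2 : m + 2 ≤ m + 3) :
    (fun j : Fin (m + 2) => (Fin.insertNth (α := fun _ => ℝ)
      (⟨m + 1, by omega⟩ : Fin (m + 3)) x u) (Fin.castLE h2 j)) =
      Fin.snoc (Fin.init u) x := by
  funext j
  rcases Fin.eq_castSucc_or_eq_last j with ⟨j', rfl⟩ | rfl
  · rw [Fin.snoc_castSucc]
    have hidx : Fin.castLE h2 (Fin.castSucc j') =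
        (⟨m + 1, by omega⟩ : Fin (m + 3)).succAbove (Fin.castSucc j') := by
      rw [Fin.succAbove_of_castSucc_lt]
      · rfl
      · rw [Fin.lt_def]
        show (j' : ℕ) < m + 1
        exact j'.2
    rw [hidx, Fin.insertNth_apply_succAbove]
    rfl
  · rw [Fin.snoc_last]
    have hidx : Fin.castLE h2 (Fin.last (m + 1)) = (⟨m + 1, by omega⟩ : Fin (m + 3)) := rfl
    rw [hidx, Fin.insertNth_apply_same]

lemma last_coord_insertNth (m : ℕ) (x : ℝ) (u : Fin (m + 2) → ℝ) :
    (Fin.insertNth (α := fun _ => ℝ) (⟨m + 1, by omega⟩ : Fin (m + 3)) x u)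
      (Fin.last (m + 2)) = u (Fin.last (m + 1)) := by
  have hidx : (Fin.last (m + 2)) =
      (⟨m + 1, by omega⟩ : Fin (m + 3)).succAbove (Fin.last (m + 1)) := by
    rw [Fin.succAbove_of_le_castSucc]
    · rfl
    · rw [Fin.le_def]
      exact le_refl _
  rw [hidx, Fin.insertNth_apply_succAbove]

lemma cCone_diff_null (k : ℕ) : volume (cCone k \ sCone k) = 0 := by
  refine measure_mono_null ?_ (bad_null (k := k))
  rintro x ⟨⟨hanti, hnonneg⟩, hns⟩
  simp only [sCone, mem_setOf_eq, not_and] at hns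
  by_cases hstrict : StrictAnti x
  · obtain ⟨i, hi⟩ := not_forall.mp (hns hstrict)
    have : x i = 0 := le_antisymm (not_lt.mp hi) (hnonneg i)
    exact Or.inr (mem_iUnion.mpr ⟨i, this⟩)
  · rw [StrictAnti] at hstrict
    push_neg at hstrict
    obtain ⟨i, j, hij, hle⟩ := hstrict
    have : x i = x j := le_antisymm hle (hanti hij.le)
    exact Or.inl (mem_iUnion.mpr ⟨i, mem_iUnion.mpr ⟨j, mem_iUnion.mpr ⟨hij.ne, Or.inl this⟩⟩⟩)

lemma vol_inter_cCone_eq (k : ℕ) (S : Set (Fin k → ℝ)) :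
    volume (S ∩ cCone k) = volume (S ∩ sCone k) := by
  refine le_antisymm ?_ (measure_mono (inter_subset_inter_right _ (sCone_subset_cCone k)))
  have hsub : S ∩ cCone k ⊆ (S ∩ sCone k) ∪ (cCone k \ sCone k) := by
    rintro x ⟨hxS, hxc⟩
    by_cases hxs : x ∈ sCone k
    · exact Or.inl ⟨hxS, hxs⟩
    · exact Or.inr ⟨hxc, hxs⟩
  calc volume (S ∩ cCone k) ≤ volume ((S ∩ sCone k) ∪ (cCone k \ sCone k)) := measure_mono hsub
    _ ≤ volume (S ∩ sCone k) + volume (cCone k \ sCone k) := measure_union_le _ _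
    _ = volume (S ∩ sCone k) := by rw [cCone_diff_null, add_zero]

lemma meas_insertNth_set {k : ℕ} (i₀ : Fin (k + 1)) (x : ℝ) (A : Set (Fin (k + 1) → ℝ))
    (hA : MeasurableSet A) : MeasurableSet {y : Fin k → ℝ | i₀.insertNth x y ∈ A} := by
  have h : {y : Fin k → ℝ | i₀.insertNth x y ∈ A} =
      (fun y => (MeasurableEquiv.piFinSuccAbove (fun _ : Fin (k + 1) => ℝ) i₀).symm (x, y)) ⁻¹' A :=
    rfl
  rw [h]
  exact ((MeasurableEquiv.piFinSuccAbove (fun _ : Fin (k + 1) => ℝ)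
    i₀).symm.measurable.comp measurable_prodMk_left) hA

lemma vol_prod_last {k : ℕ} (A : Set (Fin k → ℝ)) (hA : MeasurableSet A) (I : Set ℝ)
    (hI : MeasurableSet I) :
    volume {u : Fin (k + 1) → ℝ | Fin.init u ∈ A ∧ u (Fin.last k) ∈ I} =
      volume I * volume A := by
  have hinit : Measurable (Fin.init : (Fin (k + 1) → ℝ) → (Fin k → ℝ)) :=
    measurable_pi_lambda _ fun j => measurable_pi_apply _
  have hSm : MeasurableSet {u : Fin (k + 1) → ℝ | Fin.init u ∈ A ∧ u (Fin.last k) ∈ I} := by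
    have h : {u : Fin (k + 1) → ℝ | Fin.init u ∈ A ∧ u (Fin.last k) ∈ I} =
        (Fin.init ⁻¹' A) ∩ ((fun u : Fin (k + 1) → ℝ => u (Fin.last k)) ⁻¹' I) := rfl
    rw [h]
    exact (hinit hA).inter ((measurable_pi_apply _) hI)
  rw [vol_slice (Fin.last k) _ hSm]
  have hfun : (fun x : ℝ => volume {y : Fin k → ℝ | (Fin.last k).insertNth x y ∈
      {u : Fin (k + 1) → ℝ | Fin.init u ∈ A ∧ u (Fin.last k) ∈ I}}) =
      fun x => I.indicator (fun _ => volume A) x := by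
    funext x
    by_cases hx : x ∈ I
    · rw [indicator_of_mem hx]
      congr 1
      ext y
      simp only [mem_setOf_eq, Fin.insertNth_last', Fin.init_snoc, Fin.snoc_last]
      exact ⟨fun h => h.1, fun h => ⟨h, hx⟩⟩
    · rw [indicator_of_notMem hx]
      have he : {y : Fin k → ℝ | (Fin.last k).insertNth x y ∈
          {u : Fin (k + 1) → ℝ | Fin.init u ∈ A ∧ u (Fin.last k) ∈ I}} = ∅ := by
        ext y
        simp only [mem_setOf_eq, Fin.insertNth_last', Fin.init_snoc, Fin.snoc_last,
          mem_empty_iff_false, iff_false]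
        exact fun h => hx h.2
      rw [he, measure_empty]
  rw [hfun, lintegral_indicator hI, setLIntegral_const, mul_comm]

lemma split_Ici {L : ℝ} (hL0 : 0 ≤ L) (f : ℝ → ℝ≥0∞) (hzero : ∀ x, L < x → f x = 0) :
    ∫⁻ x in Ici (0 : ℝ), f x = ∫⁻ x in Ioc (0 : ℝ) L, f x := by
  have hsplit : (Ici (0 : ℝ)) = Icc 0 L ∪ Ioi L := (Icc_union_Ioi_eq_Ici hL0).symm
  have hdisj : Disjoint (Icc (0 : ℝ) L) (Ioi L) :=
    (Iic_disjoint_Ioi le_rfl).mono_left Icc_subset_Iic_self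
  rw [hsplit, lintegral_union measurableSet_Ioi hdisj]
  have h5 : ∫⁻ x in Ioi L, f x = 0 := by
    rw [setLIntegral_congr_fun measurableSet_Ioi (fun x hx => hzero x hx)]
    simp
  rw [h5, add_zero]
  exact (setLIntegral_congr Ioc_ae_eq_Icc).symm

end

end BFAux


open Set BFAux
open scoped ENNReal

/-- Here `n = m + 3 ≥ 3`.  `F` is the normalized decreasing slice-volume function
of the proof of the main theorem, supported on `[0, L]`; the total mass of `F`
equals `(1/(2(n-1)))·|K_{n-1}|/|K_{n-2}|` and its first moment is at least
`(1/(4n(n-1)))·|K_n|/|K_{n-2}|`. -/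
theorem F_integrals (m : ℕ) (K : Set (Fin (m + 3) → ℝ))
    (hK_compact : IsCompact K) (hK_conv : Convex ℝ K)
    (hK_int : (interior K).Nonempty)
    (hK_uncond : ∀ x ∈ K, ∀ ε : Fin (m + 3) → ℝ, (∀ i, ε i = 1 ∨ ε i = -1) →
      (fun i => ε i * x i) ∈ K)
    (hK_perm : ∀ x ∈ K, ∀ π : Equiv.Perm (Fin (m + 3)), (fun i => x (π i)) ∈ K)
    (F : ℝ → ℝ)
    (hF : F = fun x : ℝ =>
      (volume {y : Fin (m + 1) → ℝ | Antitone y ∧ (∀ j, x ≤ y j) ∧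
          Fin.snoc y x ∈ proj (m + 2) (by omega) K}).toReal /
      (volume {y : Fin (m + 1) → ℝ | Antitone y ∧ (∀ j, (0:ℝ) ≤ y j) ∧
          Fin.snoc y (0:ℝ) ∈ proj (m + 2) (by omega) K}).toReal)
    (L : ℝ) (hL0 : 0 ≤ L) (hsupp : ∀ x, L < x → F x = 0) :
    (∫ x in (0:ℝ)..L, F x) =
        1 / (2 * ((m : ℝ) + 2)) *
          ((volume (proj (m + 2) (by omega) K)).toReal /
            (volume (proj (m + 1) (by omega) K)).toReal) ∧
      (∫ x in (0:ℝ)..L, x * F x) ≥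
        1 / (4 * ((m : ℝ) + 3) * ((m : ℝ) + 2)) *
          ((volume K).toReal / (volume (proj (m + 1) (by omega) K)).toReal) := by
  classical
  have hle1 : m + 1 ≤ m + 3 := by omega
  have hle2 : m + 2 ≤ m + 3 := by omega
  set P : Set (Fin (m + 2) → ℝ) := proj (m + 2) hle2 K with hP
  set Q : Set (Fin (m + 1) → ℝ) := proj (m + 1) hle1 K with hQ
  have hPc : IsCompact P := proj_compact hle2 hK_compact
  have hQc : IsCompact Q := proj_compact hle1 hK_compact
  have hPm : MeasurableSet P := hPc.measurableSet
  have hQm : MeasurableSet Q := hQc.measurableSet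
  have hKm : MeasurableSet K := hK_compact.measurableSet
  set V : Set (Fin (m + 2) → ℝ) := {z | Antitone z ∧ z ∈ P} with hV
  have hVm : MeasurableSet V := by
    have h : V = {z : Fin (m + 2) → ℝ | Antitone z} ∩ P := rfl
    rw [h]
    exact (isClosed_antitone _).measurableSet.inter hPm
  set num : ℝ → ℝ≥0∞ :=
    fun x => volume {u : Fin (m + 1) → ℝ | (Fin.last (m + 1)).insertNth x u ∈ V} with hnum
  have hnum_meas : Measurable num := meas_slice _ V hVm
  have hnum' : ∀ x : ℝ, num x =
      volume {u : Fin (m + 1) → ℝ | (Fin.last (m + 1)).insertNth x u ∈ V} := fun _ => rfl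
  have hNset : ∀ x : ℝ, {u : Fin (m + 1) → ℝ | (Fin.last (m + 1)).insertNth x u ∈ V} =
      {y : Fin (m + 1) → ℝ | Antitone y ∧ (∀ j, x ≤ y j) ∧ Fin.snoc y x ∈ P} := by
    intro x
    ext u
    simp only [mem_setOf_eq, Fin.insertNth_last', hV]
    constructor
    · rintro ⟨ha, hmem⟩
      obtain ⟨ha1, ha2⟩ := antitone_snoc_iff.mp ha
      exact ⟨ha1, ha2, hmem⟩
    · rintro ⟨h1, h2, hmem⟩
      exact ⟨antitone_snoc_iff.mpr ⟨h1, h2⟩, hmem⟩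
  have hDset : {y : Fin (m + 1) → ℝ | Antitone y ∧ (∀ j, (0:ℝ) ≤ y j) ∧
      Fin.snoc y (0:ℝ) ∈ P} = Q ∩ cCone (m + 1) := by
    have hsec := proj_snoc_zero m K hK_conv hK_uncond hle1 hle2
    ext y
    simp only [mem_setOf_eq, mem_inter_iff, cCone]
    constructor
    · rintro ⟨h1, h2, h3⟩
      refine ⟨?_, h1, h2⟩
      rw [hQ, ← hsec]
      exact h3
    · rintro ⟨hQy, h1, h2⟩
      refine ⟨h1, h2, ?_⟩
      rw [hQ, ← hsec] at hQy
      exact hQy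
  set d : ℝ≥0∞ := volume (Q ∩ cCone (m + 1)) with hd
  have hFx : ∀ x : ℝ, F x = (num x).toReal / d.toReal := by
    intro x
    rw [hF]
    have e1 : num x = volume {y : Fin (m + 1) → ℝ | Antitone y ∧ (∀ j, x ≤ y j) ∧
        Fin.snoc y x ∈ P} := by
      rw [hnum' x, hNset x]
    have e2 : d = volume {y : Fin (m + 1) → ℝ | Antitone y ∧ (∀ j, (0:ℝ) ≤ y j) ∧
        Fin.snoc y (0:ℝ) ∈ P} := by
      rw [hd, ← hDset]
    rw [e1, e2]
  -- uniform bound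
  obtain ⟨Cb, hCb⟩ := isBounded_iff_forall_norm_le.mp hPc.isBounded
  set C' : ℝ := max Cb 0 with hC'
  have hC'0 : 0 ≤ C' := le_max_right _ _
  set B : ℝ≥0∞ := volume (Metric.closedBall (0 : Fin (m + 1) → ℝ) C') with hB
  have hBfin : B < ⊤ := (isCompact_closedBall _ _).measure_lt_top
  have hnum_le : ∀ x, num x ≤ B := by
    intro x
    rw [hnum' x]
    refine measure_mono ?_
    intro u hu
    rw [hNset x] at hu
    obtain ⟨h1, h2, h3⟩ := hu
    rw [Metric.mem_closedBall, dist_zero_right]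
    refine (pi_norm_le_iff_of_nonneg hC'0).mpr fun j => ?_
    calc ‖u j‖ = ‖(Fin.snoc u x : Fin (m + 2) → ℝ) (Fin.castSucc j)‖ := by
          rw [Fin.snoc_castSucc]
      _ ≤ ‖(Fin.snoc u x : Fin (m + 2) → ℝ)‖ := norm_le_pi_norm _ _
      _ ≤ Cb := hCb _ h3
      _ ≤ C' := le_max_left _ _
  have hnum_fin : ∀ x, num x < ⊤ := fun x => lt_of_le_of_lt (hnum_le x) hBfin
  -- d facts
  have hQvol_pos : 0 < volume Q := vol_proj_pos hle1 hK_int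
  have hQvol_fin : volume Q < ⊤ := hQc.measure_lt_top
  have hQcount : volume Q =
      ((2 ^ (m + 1) * (m + 1).factorial : ℕ) : ℝ≥0∞) * volume (Q ∩ sCone (m + 1)) :=
    counting (proj_uncond hle1 hK_uncond) (proj_perm hle1 hK_perm) hQm
  have hd_eq : d = volume (Q ∩ sCone (m + 1)) := vol_inter_cCone_eq _ Q
  have hd_pos : 0 < d := by
    rw [hd_eq]
    rcases eq_or_ne (volume (Q ∩ sCone (m + 1))) 0 with h0 | h0
    · rw [hQcount, h0, mul_zero] at hQvol_pos
      exact absurd hQvol_pos (lt_irrefl 0)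
    · exact pos_iff_ne_zero.mpr h0
  have hd_fin : d < ⊤ := lt_of_le_of_lt (measure_mono inter_subset_left) hQvol_fin
  have hdR_pos : 0 < d.toReal := ENNReal.toReal_pos hd_pos.ne' hd_fin.ne
  have hnum_zero : ∀ x, L < x → num x = 0 := by
    intro x hx
    have h0 := hsupp x hx
    rw [hFx x, div_eq_zero_iff] at h0
    rcases h0 with h0 | h0
    · exact ((ENNReal.toReal_eq_zero_iff _).mp h0).resolve_right (hnum_fin x).ne
    · exact absurd h0 hdR_pos.ne'
  -- part 1 lintegral identity
  set W : Set (Fin (m + 2) → ℝ) := P ∩ cCone (m + 2) with hW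
  have hWm : MeasurableSet W := hPm.inter (isClosed_cCone _).measurableSet
  have hWslice : volume W =
      ∫⁻ x : ℝ, volume {u : Fin (m + 1) → ℝ | (Fin.last (m + 1)).insertNth x u ∈ W} :=
    vol_slice _ W hWm
  have hslice_eq : ∀ x : ℝ,
      volume {u : Fin (m + 1) → ℝ | (Fin.last (m + 1)).insertNth x u ∈ W} =
      (Ici (0:ℝ)).indicator num x := by
    intro x
    by_cases hx : (0:ℝ) ≤ x
    · rw [indicator_of_mem (mem_Ici.mpr hx), hnum]
      congr 1
      ext u
      simp only [mem_setOf_eq, Fin.insertNth_last', hW, hV, mem_inter_iff, cCone]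
      constructor
      · rintro ⟨hmem, hanti, _⟩
        exact ⟨hanti, hmem⟩
      · rintro ⟨hanti, hmem⟩
        refine ⟨hmem, hanti, fun i => ?_⟩
        have h6 := hanti (Fin.le_last i)
        rw [Fin.snoc_last] at h6
        exact hx.trans h6
    · rw [indicator_of_notMem (fun hmem => hx (mem_Ici.mp hmem))]
      have he : {u : Fin (m + 1) → ℝ | (Fin.last (m + 1)).insertNth x u ∈ W} = ∅ := by
        ext u
        simp only [mem_setOf_eq, Fin.insertNth_last', hW, mem_inter_iff, cCone,
          mem_empty_iff_false, iff_false]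
        rintro ⟨_, _, hpos⟩
        have h7 := hpos (Fin.last (m + 1))
        rw [Fin.snoc_last] at h7
        exact hx h7
      rw [he, measure_empty]
  have hlint1 : volume W = ∫⁻ x in Ioc (0:ℝ) L, num x := by
    rw [hWslice]
    have h8 : (fun x : ℝ =>
        volume {u : Fin (m + 1) → ℝ | (Fin.last (m + 1)).insertNth x u ∈ W}) =
        fun x => (Ici (0:ℝ)).indicator num x := funext hslice_eq
    rw [h8, lintegral_indicator measurableSet_Ici]
    exact split_Ici hL0 num hnum_zero
  have hPcount : volume P =
      ((2 ^ (m + 2) * (m + 2).factorial : ℕ) : ℝ≥0∞) * volume (P ∩ sCone (m + 2)) :=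
    counting (proj_uncond hle2 hK_uncond) (proj_perm hle2 hK_perm) hPm
  have hWsc : volume W = volume (P ∩ sCone (m + 2)) := vol_inter_cCone_eq _ P
  have hPart1 : (∫ x in (0:ℝ)..L, F x) = (volume W).toReal / d.toReal := by
    rw [intervalIntegral.integral_of_le hL0]
    simp_rw [hFx]
    rw [MeasureTheory.integral_div]
    congr 1
    have hersatz : (∫ x in Ioc (0:ℝ) L, (num x).toReal) =
        (∫⁻ x in Ioc (0:ℝ) L, num x).toReal :=
      integral_toReal (hnum_meas.aemeasurable.restrict) (ae_of_all _ hnum_fin)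
    rw [hersatz, hlint1]
  -- arithmetic facts
  have hq' : (volume Q).toReal = ((2 ^ (m + 1) * (m + 1).factorial : ℕ) : ℝ) * d.toReal := by
    rw [hQcount, ENNReal.toReal_mul, ENNReal.toReal_natCast, ← hd_eq]
  have hb : ((2 ^ (m + 1) * (m + 1).factorial : ℕ) : ℝ) ≠ 0 := by positivity
  have hdd : d.toReal ≠ 0 := hdR_pos.ne'
  constructor
  · rw [hPart1]
    show (volume W).toReal / d.toReal = 1 / (2 * ((m : ℝ) + 2)) *
      ((volume P).toReal / (volume Q).toReal)
    have hp' : (volume P).toReal =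
        ((2 ^ (m + 2) * (m + 2).factorial : ℕ) : ℝ) * (volume W).toReal := by
      rw [hPcount, ENNReal.toReal_mul, ENNReal.toReal_natCast, ← hWsc]
    have hab : ((2 ^ (m + 2) * (m + 2).factorial : ℕ) : ℝ) =
        2 * ((m : ℝ) + 2) * ((2 ^ (m + 1) * (m + 1).factorial : ℕ) : ℝ) := by
      have hfact : ((m + 2).factorial : ℝ) = ((m : ℝ) + 2) * ((m + 1).factorial : ℝ) := by
        rw [show m + 2 = (m + 1) + 1 from rfl, Nat.factorial_succ]
        push_cast
        ring
      push_cast [hfact]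
      ring
    rw [hp', hq', hab]
    have hm2 : (2 * ((m : ℝ) + 2)) ≠ 0 := by positivity
    field_simp
  · -- Part 2
    set i₀ : Fin (m + 3) := ⟨m + 1, by omega⟩ with hi₀
    set U : Set (Fin (m + 3) → ℝ) := K ∩ cCone (m + 3) with hU
    have hUm : MeasurableSet U := hKm.inter (isClosed_cCone _).measurableSet
    have hUslice : volume U =
        ∫⁻ x : ℝ, volume {u : Fin (m + 2) → ℝ | i₀.insertNth x u ∈ U} := vol_slice i₀ U hUm
    have hslice_le : ∀ x : ℝ, volume {u : Fin (m + 2) → ℝ | i₀.insertNth x u ∈ U} ≤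
        (Ici (0:ℝ)).indicator (fun x => ENNReal.ofReal x * num x) x := by
      intro x
      by_cases hx : (0:ℝ) ≤ x
      · rw [indicator_of_mem (mem_Ici.mpr hx)]
        have hsub : {u : Fin (m + 2) → ℝ | i₀.insertNth x u ∈ U} ⊆
            {u : Fin (m + 2) → ℝ |
              Fin.init u ∈ {y : Fin (m + 1) → ℝ | (Fin.last (m + 1)).insertNth x y ∈ V} ∧
              u (Fin.last (m + 1)) ∈ Icc (0:ℝ) x} := by
          rintro u ⟨huK, hanti, hpos⟩
          have hres := restrict_insertNth m x u hle2
          have hmemP : Fin.snoc (Fin.init u) x ∈ P := ⟨i₀.insertNth x u, huK, hres⟩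
          have hanti2 : Antitone (Fin.snoc (Fin.init u) x : Fin (m + 2) → ℝ) := by
            rw [← hres]
            intro a b hab
            exact hanti hab
          have hlastc := last_coord_insertNth m x u
          refine ⟨?_, ?_, ?_⟩
          · show (Fin.last (m + 1)).insertNth x (Fin.init u) ∈ V
            rw [show (Fin.last (m + 1)).insertNth x (Fin.init u) =
              Fin.snoc (Fin.init u) x from Fin.insertNth_last' x _]
            exact ⟨hanti2, hmemP⟩
          · have h9 := hpos (Fin.last (m + 2))
            rw [hlastc] at h9
            exact h9
          · have h9 := hanti (Fin.le_last i₀)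
            rw [hlastc, Fin.insertNth_apply_same] at h9
            exact h9
        calc volume {u : Fin (m + 2) → ℝ | i₀.insertNth x u ∈ U}
            ≤ volume {u : Fin (m + 2) → ℝ |
              Fin.init u ∈ {y : Fin (m + 1) → ℝ | (Fin.last (m + 1)).insertNth x y ∈ V} ∧
              u (Fin.last (m + 1)) ∈ Icc (0:ℝ) x} := measure_mono hsub
          _ = volume (Icc (0:ℝ) x) * num x := by
              rw [vol_prod_last _ (meas_insertNth_set _ x V hVm) _ measurableSet_Icc, hnum' x]
          _ = ENNReal.ofReal x * num x := by rw [Real.volume_Icc, sub_zero]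
      · rw [indicator_of_notMem (fun hmem => hx (mem_Ici.mp hmem))]
        have he : {u : Fin (m + 2) → ℝ | i₀.insertNth x u ∈ U} = ∅ := by
          ext u
          simp only [mem_setOf_eq, hU, mem_inter_iff, cCone, mem_empty_iff_false, iff_false]
          rintro ⟨_, _, hpos⟩
          have h9 := hpos i₀
          rw [Fin.insertNth_apply_same] at h9
          exact hx h9
        rw [he, measure_empty]
    have hUle : volume U ≤ ∫⁻ x in Ioc (0:ℝ) L, ENNReal.ofReal x * num x := by
      rw [hUslice]
      calc ∫⁻ x : ℝ, volume {u : Fin (m + 2) → ℝ | i₀.insertNth x u ∈ U}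
          ≤ ∫⁻ x : ℝ, (Ici (0:ℝ)).indicator (fun x => ENNReal.ofReal x * num x) x :=
            lintegral_mono hslice_le
        _ = ∫⁻ x in Ici (0:ℝ), ENNReal.ofReal x * num x :=
            lintegral_indicator measurableSet_Ici _
        _ = ∫⁻ x in Ioc (0:ℝ) L, ENNReal.ofReal x * num x :=
            split_Ici hL0 _ (fun x hx => by rw [hnum_zero x hx, mul_zero])
    have hI2fin : (∫⁻ x in Ioc (0:ℝ) L, ENNReal.ofReal x * num x) < ⊤ := by
      calc (∫⁻ x in Ioc (0:ℝ) L, ENNReal.ofReal x * num x)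
          ≤ ∫⁻ _ in Ioc (0:ℝ) L, ENNReal.ofReal L * B := by
            refine setLIntegral_mono' measurableSet_Ioc fun x hx => ?_
            exact mul_le_mul' (ENNReal.ofReal_le_ofReal hx.2) (hnum_le x)
        _ = ENNReal.ofReal L * B * volume (Ioc (0:ℝ) L) := setLIntegral_const _ _
        _ < ⊤ := by
            refine ENNReal.mul_lt_top ?_ ?_
            · exact ENNReal.mul_lt_top ENNReal.ofReal_lt_top hBfin
            · exact measure_Ioc_lt_top
    have hmeas2 : Measurable fun x : ℝ => ENNReal.ofReal x * num x :=
      (ENNReal.measurable_ofReal.comp measurable_id).mul hnum_meas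
    have hPart2 : (∫ x in (0:ℝ)..L, x * F x) =
        (∫⁻ x in Ioc (0:ℝ) L, ENNReal.ofReal x * num x).toReal / d.toReal := by
      rw [intervalIntegral.integral_of_le hL0]
      have h8 : ∀ᵐ x ∂(volume.restrict (Ioc (0:ℝ) L)),
          x * F x = (ENNReal.ofReal x * num x).toReal / d.toReal := by
        refine (ae_restrict_iff' measurableSet_Ioc).mpr (ae_of_all _ fun x hx => ?_)
        rw [hFx x, ENNReal.toReal_mul, ENNReal.toReal_ofReal hx.1.le]
        ring
      rw [integral_congr_ae h8, MeasureTheory.integral_div]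
      congr 1
      exact integral_toReal (hmeas2.aemeasurable.restrict)
        (ae_of_all _ fun x => ENNReal.mul_lt_top ENNReal.ofReal_lt_top (hnum_fin x))
    have hKcount : volume K =
        ((2 ^ (m + 3) * (m + 3).factorial : ℕ) : ℝ≥0∞) * volume (K ∩ sCone (m + 3)) :=
      counting hK_uncond hK_perm hKm
    have hUsc : volume U = volume (K ∩ sCone (m + 3)) := vol_inter_cCone_eq _ K
    have hUfin : volume U < ⊤ :=
      lt_of_le_of_lt (measure_mono inter_subset_left) hK_compact.measure_lt_top
    have hUR : (volume U).toReal ≤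
        (∫⁻ x in Ioc (0:ℝ) L, ENNReal.ofReal x * num x).toReal :=
      ENNReal.toReal_mono hI2fin.ne hUle
    rw [ge_iff_le, hPart2]
    show 1 / (4 * ((m : ℝ) + 3) * ((m : ℝ) + 2)) * ((volume K).toReal / (volume Q).toReal) ≤ _
    have hk' : (volume K).toReal =
        ((2 ^ (m + 3) * (m + 3).factorial : ℕ) : ℝ) * (volume U).toReal := by
      rw [hKcount, ENNReal.toReal_mul, ENNReal.toReal_natCast, ← hUsc]
    have hconst : ((2 ^ (m + 3) * (m + 3).factorial : ℕ) : ℝ) =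
        4 * ((m : ℝ) + 3) * ((m : ℝ) + 2) * ((2 ^ (m + 1) * (m + 1).factorial : ℕ) : ℝ) := by
      have hf2 : ((m + 2).factorial : ℝ) = ((m : ℝ) + 2) * ((m + 1).factorial : ℝ) := by
        rw [show m + 2 = (m + 1) + 1 from rfl, Nat.factorial_succ]
        push_cast
        ring
      have hf3 : ((m + 3).factorial : ℝ) = ((m : ℝ) + 3) * ((m + 2).factorial : ℝ) := by
        rw [show m + 3 = (m + 2) + 1 from rfl, Nat.factorial_succ]
        push_cast
        ring
      push_cast [hf3, hf2]
      ring
    have heq : 1 / (4 * ((m : ℝ) + 3) * ((m : ℝ) + 2)) *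
        ((volume K).toReal / (volume Q).toReal) = (volume U).toReal / d.toReal := by
      rw [hk', hq', hconst]
      have hm32 : (4 * ((m : ℝ) + 3) * ((m : ℝ) + 2)) ≠ 0 := by positivity
      field_simp
    rw [heq]
    gcongr
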